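/- Let f : ℕ → ℕ⁺ with f(n) → ∞, and define g(x) = lg x / (f(x) · lg lg x) for x ≥ 4 and g(x) = 0 for x < 4. Then for every k there exists N such that every g-regressive coloring c : [N]² → ℕ admits a homogeneous subset of size k. -/

import Mathlib

/-- `H` is homogeneous for the pair coloring `c`. -/
def Homog (c : ℕ → ℕ → ℕ) (H : Finset ℕ) : Prop :=
  ∀ m n m' n', m ∈ H → n ∈ H → m' ∈ H → n' ∈ H → m < n → m' < n' → c m n = c m' n'

/-- Greedy construction of a min-homogeneous set. -/
lemma minHomogAux (c : ℕ → ℕ → ℕ) (r : ℕ) (hr : 0 < r) :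
    ∀ t (S : Finset ℕ), (∀ m ∈ S, ∀ n ∈ S, m < n → c m n < r) →
      (r + 1) ^ t ≤ S.card →
      ∃ T, T ⊆ S ∧ T.card = t ∧
        ∀ m ∈ T, ∀ n ∈ T, ∀ n' ∈ T, m < n → m < n' → c m n = c m n' := by
  intro t
  induction t with
  | zero => exact fun S _ _ => ⟨∅, by simp, by simp, by simp⟩
  | succ t ih =>
    intro S hcol hcard
    have hpow1 : 1 ≤ (r + 1) ^ t := Nat.one_le_pow _ _ (by omega)
    have hS : S.Nonempty := by
      rw [← Finset.card_pos]
      calc 1 ≤ (r + 1) ^ (t + 1) := Nat.one_le_pow _ _ (by omega)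
        _ ≤ S.card := hcard
    set a := S.min' hS with ha
    have haS : a ∈ S := S.min'_mem hS
    set S' := S.erase a with hS'
    have hmaps : ∀ n ∈ S', c a n ∈ Finset.range r := by
      intro n hn
      have hna : n ≠ a := Finset.ne_of_mem_erase hn
      have hnS : n ∈ S := Finset.mem_of_mem_erase hn
      have : a < n := lt_of_le_of_ne (S.min'_le n hnS) (Ne.symm hna)
      exact Finset.mem_range.2 (hcol a haS n hnS this)
    have hcard' : S'.card = S.card - 1 := Finset.card_erase_of_mem haS
    have hlt : (Finset.range r).card * ((r + 1) ^ t - 1) < S'.card := by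
      rw [Finset.card_range, hcard']
      have h1 : (r + 1) ^ (t + 1) = r * (r + 1) ^ t + (r + 1) ^ t := by ring
      have h2 : r * ((r + 1) ^ t - 1) + r = r * (r + 1) ^ t := by
        rcases h : (r + 1) ^ t with _ | p
        · omega
        · simp [Nat.mul_succ]
      omega
    obtain ⟨i, -, hi⟩ := Finset.exists_lt_card_fiber_of_mul_lt_card_of_maps_to hmaps hlt
    set F := S'.filter (fun n => c a n = i) with hF
    have hFcard : (r + 1) ^ t ≤ F.card := by omega
    have hFS : F ⊆ S := fun x hx =>
      Finset.mem_of_mem_erase (Finset.mem_of_mem_filter x hx)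
    obtain ⟨T, hsub, hcardT, hhom⟩ := ih F
      (fun m hm n hn h => hcol m (hFS hm) n (hFS hn) h) hFcard
    have haT : a ∉ T := by
      intro h
      exact Finset.notMem_erase a S (Finset.mem_of_mem_filter a (hsub h))
    have haltT : ∀ x ∈ T, a < x := by
      intro x hx
      have hxS' : x ∈ S' := Finset.mem_of_mem_filter x (hsub hx)
      exact lt_of_le_of_ne (S.min'_le x (Finset.mem_of_mem_erase hxS'))
        (Ne.symm (Finset.ne_of_mem_erase hxS'))
    have hcai : ∀ x ∈ T, c a x = i := by
      intro x hx
      exact (Finset.mem_filter.1 (hsub hx)).2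
    refine ⟨insert a T, ?_, ?_, ?_⟩
    · intro x hx
      rcases Finset.mem_insert.1 hx with h | h
      · exact h ▸ haS
      · exact hFS (hsub h)
    · rw [Finset.card_insert_of_notMem haT, hcardT]
    · intro m hm n hn n' hn' hmn hmn'
      have hnT : ∀ x, x ∈ insert a T → m < x → x ∈ T := by
        intro x hx hlt'
        rcases Finset.mem_insert.1 hx with h | h
        · exfalso
          rcases Finset.mem_insert.1 hm with h' | h'
          · omega
          · have := haltT m h'; omega
        · exact h
      rcases Finset.mem_insert.1 hm with h | h
      · subst h
        rw [hcai n (hnT n hn hmn), hcai n' (hnT n' hn' hmn')]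
      · exact hhom m h n (hnT n hn hmn) n' (hnT n' hn' hmn') hmn hmn'

/-- Finite Ramsey theorem for pairs, on a set of naturals, with explicit bound. -/
lemma ramseyOn (c : ℕ → ℕ → ℕ) (r k : ℕ) (hr : 0 < r) (S : Finset ℕ)
    (hcol : ∀ m ∈ S, ∀ n ∈ S, m < n → c m n < r)
    (hcard : (r + 1) ^ (r * (k - 1) + 2) ≤ S.card) :
    ∃ H, H ⊆ S ∧ H.card = k ∧ Homog c H := by
  obtain ⟨T, hTS, hTcard, hThom⟩ := minHomogAux c r hr (r * (k - 1) + 2) S hcol hcard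
  have hT : T.Nonempty := by
    rw [← Finset.card_pos, hTcard]; omega
  set b := T.max' hT with hb
  have hbT : b ∈ T := T.max'_mem hT
  set T' := T.erase b with hT'
  have hT'card : T'.card = r * (k - 1) + 1 := by
    rw [hT', Finset.card_erase_of_mem hbT, hTcard]
    omega
  have hltb : ∀ x ∈ T', x < b := fun x hx =>
    lt_of_le_of_ne (T.le_max' x (Finset.mem_of_mem_erase hx)) (Finset.ne_of_mem_erase hx)
  have hmaps : ∀ x ∈ T', c x b ∈ Finset.range r := by
    intro x hx
    exact Finset.mem_range.2 (hcol x (hTS (Finset.mem_of_mem_erase hx)) b (hTS hbT) (hltb x hx))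
  have hlt : (Finset.range r).card * (k - 1) < T'.card := by
    rw [Finset.card_range, hT'card]; omega
  obtain ⟨i, -, hi⟩ := Finset.exists_lt_card_fiber_of_mul_lt_card_of_maps_to hmaps hlt
  set F := T'.filter (fun x => c x b = i) with hF
  have hFk : k ≤ F.card := by omega
  obtain ⟨H, hHF, hHcard⟩ := Finset.exists_subset_card_eq hFk
  have hHT : ∀ x ∈ H, x ∈ T := fun x hx =>
    Finset.mem_of_mem_erase (Finset.mem_of_mem_filter x (hHF hx))
  have key : ∀ m ∈ H, ∀ n ∈ H, m < n → c m n = i := by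
    intro m hm n hn hmn
    have hmT' : m ∈ T' := Finset.mem_of_mem_filter m (hHF hm)
    have hmb : m < b := hltb m hmT'
    have : c m n = c m b :=
      hThom m (hHT m hm) n (hHT n hn) b hbT hmn hmb
    rw [this]
    exact (Finset.mem_filter.1 (hHF hm)).2
  refine ⟨H, fun x hx => hTS (hHT x hx), hHcard, ?_⟩
  intro m n m' n' hm hn hm' hn' h1 h2
  rw [key m hm n hn h1, key m' hm' n' hn' h2]

lemma le_two_pow_sub_two : ∀ s, 5 ≤ s → s ≤ 2 ^ (s - 2) := by
  intro s hs
  induction s with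
  | zero => omega
  | succ n ih =>
    rcases Nat.lt_or_ge n 5 with h | h
    · interval_cases n <;> simp <;> omega
    · have h1 := ih (by omega)
      have h2 : n + 1 - 2 = (n - 2) + 1 := by omega
      rw [h2, pow_succ]
      omega

theorem stmt16 (f : ℕ → ℕ) (hf0 : ∀ n, 0 < f n)
    (hf : Filter.Tendsto f Filter.atTop Filter.atTop)
    (g : ℕ → ℕ)
    (hgdef : ∀ x, g x = if 4 ≤ x then Nat.log 2 x / (f x * Nat.log 2 (Nat.log 2 x)) else 0)
    (k : ℕ) :
    ∃ N : ℕ, ∀ c : ℕ → ℕ → ℕ, (∀ m n, m < n → c m n ≤ g m) →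
      ∃ H : Finset ℕ, H ⊆ Finset.range N ∧ H.card = k ∧ Homog c H := by
  -- Parameters
  obtain ⟨K, hK⟩ : ∃ K, K = k + 2 := ⟨_, rfl⟩
  obtain ⟨A, hA⟩ : ∃ A, A = 16 * K := ⟨_, rfl⟩
  obtain ⟨M₀, hM₀⟩ := (hf.eventually_ge_atTop A).exists_forall_of_atTop
  obtain ⟨s, hs⟩ : ∃ s, s = max (max M₀ K) 5 := ⟨_, rfl⟩
  have hs5 : 5 ≤ s := hs ▸ le_max_right _ _
  have hsK : K ≤ s := hs ▸ le_trans (le_max_right M₀ K) (le_max_left _ _)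
  have hsM₀ : M₀ ≤ s := hs ▸ le_trans (le_max_left M₀ K) (le_max_left _ _)
  obtain ⟨M, hM⟩ : ∃ M, M = 2 ^ (2 ^ s) := ⟨_, rfl⟩
  obtain ⟨L, hL⟩ : ∃ L, L = 2 ^ (2 * s) := ⟨_, rfl⟩
  obtain ⟨N, hN⟩ : ∃ N, N = 2 ^ L := ⟨_, rfl⟩
  obtain ⟨r, hr⟩ : ∃ r, r = L / (A * s) + 1 := ⟨_, rfl⟩
  have hrpos : 0 < r := hr ▸ Nat.succ_pos _
  have hK2 : 2 ≤ K := by omega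
  -- basic facts
  have hL4 : 4 ≤ L := by
    rw [hL]
    calc (4:ℕ) = 2 ^ 2 := by norm_num
      _ ≤ 2 ^ (2 * s) := Nat.pow_le_pow_right (by norm_num) (by omega)
  have h2s : 2 ^ s ≤ L - 1 := by
    have h1 : 2 ^ s < 2 ^ (2 * s) := Nat.pow_lt_pow_right one_lt_two (by omega)
    omega
  have hML : M ≤ 2 ^ (L - 1) := hM ▸ Nat.pow_le_pow_right (by norm_num) h2s
  have hLsplit : 2 ^ (L - 1) + 2 ^ (L - 1) = N := by
    have h1 : N = 2 ^ (L - 1) * 2 := by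
      rw [hN, ← pow_succ]
      congr 1
      omega
    omega
  have hMN : M ≤ N := by omega
  -- the key counting estimate
  have hsle : s ≤ 2 ^ (s - 2) := le_two_pow_sub_two s hs5
  have hAspos : 0 < 2 * s * K := by positivity
  have h3 : 2 * s * K + 1 ≤ L / 2 := by
    have hp1 : 2 * s * K ≤ 2 * s * s := Nat.mul_le_mul_left (2 * s) hsK
    have hp2 : 2 * s * s ≤ 2 * (s * s) := by rw [mul_assoc]
    have hss : 25 ≤ s * s := Nat.mul_le_mul hs5 hs5
    have hsq : s * s ≤ 2 ^ (s - 2) * 2 ^ (s - 2) := Nat.mul_le_mul hsle hsle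
    have h5 : 8 * (2 ^ (s - 2) * 2 ^ (s - 2)) = 2 ^ (2 * s - 1) := by
      rw [← pow_add]
      have e2 : (2:ℕ) ^ (2 * s - 1) = 2 ^ 3 * 2 ^ (s - 2 + (s - 2)) := by
        rw [← pow_add]
        congr 1
        omega
      rw [e2]
      norm_num
    have h6 : 2 ^ (2 * s - 1) * 2 = L := by
      rw [hL, ← pow_succ]
      congr 1
      omega
    omega
  have hexp : 2 * s * (r * K) ≤ L - 1 := by
    have hrK : 2 * s * (r * K) = 2 * s * K * (L / (A * s)) + 2 * s * K := by
      rw [hr]; ring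
    have h1 : 2 * s * K * (L / (A * s)) ≤ 2 * s * K * L / (A * s) :=
      Nat.mul_div_le_mul_div_assoc _ _ _
    have h2 : 2 * s * K * L / (A * s) = L / 8 := by
      have hAs : A * s = 2 * s * K * 8 := by rw [hA]; ring
      rw [hAs]
      exact Nat.mul_div_mul_left L 8 hAspos
    have hL8 : L / 8 ≤ L / 2 := Nat.div_le_div_left (by norm_num) (by norm_num)
    omega
  -- cardinality bound for ramsey
  have hrL : r + 1 ≤ L := by
    have hA2 : 2 ≤ A * s := by
      have h1 : A ≤ A * s := Nat.le_mul_of_pos_right A (by omega)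
      omega
    have h1 : L / (A * s) ≤ L / 2 := Nat.div_le_div_left hA2 (by norm_num)
    omega
  have hcardbound : (r + 1) ^ (r * (k - 1) + 2) ≤ (Finset.Ico M N).card := by
    rw [Nat.card_Ico]
    have he : r * (k - 1) + 2 ≤ r * K := by
      have h1 : r * (k - 1) ≤ r * k := Nat.mul_le_mul_left r (by omega)
      have h2 : r * K = r * k + 2 * r := by rw [hK]; ring
      omega
    calc (r + 1) ^ (r * (k - 1) + 2) ≤ L ^ (r * (k - 1) + 2) :=
          Nat.pow_le_pow_left hrL _
      _ ≤ L ^ (r * K) := Nat.pow_le_pow_right (by omega) he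
      _ = 2 ^ (2 * s * (r * K)) := by rw [hL, ← pow_mul]
      _ ≤ 2 ^ (L - 1) := Nat.pow_le_pow_right (by norm_num) hexp
      _ ≤ N - M := by omega
  refine ⟨N, fun c hc => ?_⟩
  -- colors are < r on Ico M N
  have hcol : ∀ m ∈ Finset.Ico M N, ∀ n ∈ Finset.Ico M N, m < n → c m n < r := by
    intro m hm n hn hmn
    rw [Finset.mem_Ico] at hm hn
    have hMm : M ≤ m := hm.1
    have h4M : 4 ≤ M := by
      rw [hM]
      calc (4:ℕ) = 2 ^ (2 ^ 1) := by norm_num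
        _ ≤ 2 ^ (2 ^ s) := Nat.pow_le_pow_right (by norm_num)
            (Nat.pow_le_pow_right (by norm_num) (by omega))
    have hm4 : 4 ≤ m := by omega
    have hgm : g m = Nat.log 2 m / (f m * Nat.log 2 (Nat.log 2 m)) := by
      rw [hgdef m, if_pos hm4]
    have hsM : s ≤ M := by
      rw [hM]
      calc s ≤ 2 ^ s := (Nat.lt_two_pow_self (n := s)).le
        _ ≤ 2 ^ (2 ^ s) := Nat.pow_le_pow_right (by norm_num) (Nat.lt_two_pow_self (n := s)).le
    have hfm : A ≤ f m := hM₀ m (by omega)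
    have hloglog : s ≤ Nat.log 2 (Nat.log 2 m) := by
      have h1 : 2 ^ s ≤ Nat.log 2 m := by
        calc 2 ^ s = Nat.log 2 M := by rw [hM, Nat.log_pow one_lt_two]
          _ ≤ Nat.log 2 m := Nat.log_mono_right hMm
      calc s = Nat.log 2 (2 ^ s) := (Nat.log_pow one_lt_two s).symm
        _ ≤ Nat.log 2 (Nat.log 2 m) := Nat.log_mono_right h1
    have hlogm : Nat.log 2 m ≤ L := by
      have h1 : Nat.log 2 m < L := Nat.log_lt_of_lt_pow (by omega) (by rw [← hN]; exact hm.2)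
      omega
    have hgle : g m ≤ L / (A * s) := by
      rw [hgm]
      exact Nat.div_le_div hlogm (Nat.mul_le_mul hfm hloglog) (Nat.mul_pos (by omega) (by omega) : 0 < A * s).ne'
    have := hc m n hmn
    omega
  obtain ⟨H, hHsub, hHcard, hHhom⟩ := ramseyOn c r k hrpos (Finset.Ico M N) hcol hcardbound
  refine ⟨H, ?_, hHcard, hHhom⟩
  intro x hx
  have := hHsub hx
  rw [Finset.mem_Ico] at this
  exact Finset.mem_range.2 this.2
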